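/- Contrapositive of Landau's theorem: Let A : [1,∞) → ℝ be continuous, and suppose the integral g(s) = ∫₁^∞ A(x) x^{-s} dx converges for all s with Re s sufficiently large. Suppose there is a real number σ₁ and a holomorphic function G on an open set U ⊆ ℂ containing both the real ray {σ ∈ ℝ : σ > σ₁} and a half-plane {Re s > c} on which the integral converges, with G agreeing with g on that half-plane; and suppose that g admits no holomorphic extension to the full half-plane {s ∈ ℂ : Re s > σ₁}. Then A(x) changes sign for arbitrarily large x: for every X ≥ 1 there exist x, y > X with A(x) > 0 and A(y) < 0. -/

import Mathlib

open MeasureTheory Filter Set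

namespace LandauAux

noncomputable def gfun (A : ℝ → ℝ) (n : ℕ) (s : ℂ) : ℂ :=
  ∫ x in Set.Ioi (1:ℝ), (A x : ℂ) * (Real.log x : ℂ) ^ n * (x : ℂ) ^ (-s)

def P (A : ℝ → ℝ) (σ : ℝ) : Prop :=
  IntegrableOn (fun x : ℝ => |A x| * x ^ (-σ)) (Set.Ioi (1:ℝ))

lemma cpow_eq_exp {x : ℝ} (hx : 0 < x) (s : ℂ) :
    (x:ℂ) ^ (-s) = Complex.exp ((Real.log x : ℂ) * (-s)) := by
  rw [Complex.cpow_def_of_ne_zero (by exact_mod_cast hx.ne'), Complex.ofReal_log hx.le]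

lemma norm_integrand (A : ℝ → ℝ) {x : ℝ} (hx : 1 ≤ x) (n : ℕ) (s : ℂ) :
    ‖(A x : ℂ) * (Real.log x : ℂ) ^ n * (x:ℂ) ^ (-s)‖
      = |A x| * (Real.log x) ^ n * x ^ (-s.re) := by
  have hx0 : 0 < x := lt_of_lt_of_le one_pos hx
  rw [norm_mul, norm_mul, norm_pow, Complex.norm_real, Complex.norm_real,
    Complex.norm_cpow_eq_rpow_re_of_pos hx0, Complex.neg_re,
    Real.norm_eq_abs, Real.norm_eq_abs, abs_of_nonneg (Real.log_nonneg hx)]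

lemma contOn_integrand (A : ℝ → ℝ) (hA : ContinuousOn A (Ici 1)) (n : ℕ) (s : ℂ) :
    ContinuousOn (fun x : ℝ => (A x : ℂ) * (Real.log x : ℂ) ^ n * (x:ℂ) ^ (-s)) (Ici 1) := by
  have hsub : (Ici (1:ℝ)) ⊆ {(0:ℝ)}ᶜ := by
    intro x hx
    simp only [mem_compl_iff, mem_singleton_iff]
    intro h; rw [h] at hx; exact absurd (mem_Ici.mp hx) (by norm_num)
  have hlog : ContinuousOn (fun x : ℝ => ((Real.log x : ℝ) : ℂ)) (Ici 1) :=
    Complex.continuous_ofReal.comp_continuousOn (Real.continuousOn_log.mono hsub)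
  have hcp : ContinuousOn (fun x : ℝ => (x:ℂ) ^ (-s)) (Ici 1) := by
    have h1 : ContinuousOn (fun x : ℝ => Complex.exp ((Real.log x : ℂ) * (-s))) (Ici 1) :=
      Complex.continuous_exp.comp_continuousOn (hlog.mul continuousOn_const)
    exact h1.congr (fun x hx => cpow_eq_exp (lt_of_lt_of_le one_pos (mem_Ici.mp hx)) s)
  exact ((Complex.continuous_ofReal.comp_continuousOn hA).mul (hlog.pow n)).mul hcp

lemma contOn_rInt (A : ℝ → ℝ) (hA : ContinuousOn A (Ici 1)) (n : ℕ) (σ₀ : ℝ) :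
    ContinuousOn (fun x : ℝ => A x * Real.log x ^ n * x ^ (-σ₀)) (Ici 1) := by
  have hsub : (Ici (1:ℝ)) ⊆ {(0:ℝ)}ᶜ := by
    intro x hx
    simp only [mem_compl_iff, mem_singleton_iff]
    intro h; rw [h] at hx; exact absurd (mem_Ici.mp hx) (by norm_num)
  have hlog : ContinuousOn Real.log (Ici 1) := Real.continuousOn_log.mono hsub
  have hcp : ContinuousOn (fun x : ℝ => x ^ (-σ₀)) (Ici 1) :=
    continuousOn_id.rpow_const (fun x hx => Or.inl (by
      have h1 := mem_Ici.mp hx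
      simp only [id_eq]
      intro h; rw [h] at h1; exact absurd h1 (by norm_num)))
  exact (hA.mul (hlog.pow n)).mul hcp

lemma pow_log_le (n : ℕ) {δ : ℝ} (hδ : 0 < δ) :
    ∃ C : ℝ, 0 < C ∧ ∀ x : ℝ, 1 ≤ x → (Real.log x) ^ n ≤ C * x ^ δ := by
  set ε := δ / (n+1) with hε
  have hε0 : 0 < ε := by positivity
  refine ⟨(1/ε)^n, by positivity, fun x hx => ?_⟩
  have hx0 : (0:ℝ) < x := lt_of_lt_of_le one_pos hx
  have h2 : (Real.log x)^n ≤ (x ^ ε / ε)^n :=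
    pow_le_pow_left₀ (Real.log_nonneg hx) (Real.log_le_rpow_div hx0.le hε0) n
  have hεn : ε * n ≤ δ := by
    rw [hε, div_mul_eq_mul_div, div_le_iff₀ (by positivity)]
    nlinarith [hδ.le]
  calc (Real.log x)^n ≤ (x ^ ε / ε)^n := h2
    _ = (1/ε)^n * (x^ε)^n := by rw [div_pow]; ring
    _ = (1/ε)^n * x^(ε * n) := by
        rw [← Real.rpow_natCast (x^ε) n, ← Real.rpow_mul hx0.le]
    _ ≤ (1/ε)^n * x^δ := by
        refine mul_le_mul_of_nonneg_left ?_ (by positivity)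
        exact Real.rpow_le_rpow_of_exponent_le hx hεn


lemma aesm_integrand (A : ℝ → ℝ) (hA : ContinuousOn A (Ici 1)) (n : ℕ) (s : ℂ) :
    AEStronglyMeasurable (fun x : ℝ => (A x : ℂ) * (Real.log x : ℂ) ^ n * (x:ℂ) ^ (-s))
      (volume.restrict (Set.Ioi (1:ℝ))) :=
  ((contOn_integrand A hA n s).mono Ioi_subset_Ici_self).aestronglyMeasurable measurableSet_Ioi

lemma integrableOn_cInt (A : ℝ → ℝ) (hA : ContinuousOn A (Ici 1)) {σ : ℝ} (hP : P A σ)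
    (n : ℕ) {s : ℂ} (hs : σ < s.re) :
    IntegrableOn (fun x : ℝ => (A x : ℂ) * (Real.log x : ℂ) ^ n * (x:ℂ) ^ (-s)) (Ioi 1) := by
  obtain ⟨C, hC, hCle⟩ := pow_log_le n (δ := s.re - σ) (by linarith)
  refine Integrable.mono' (hP.const_mul C) (aesm_integrand A hA n s) ?_
  rw [ae_restrict_iff' measurableSet_Ioi]
  refine Filter.Eventually.of_forall (fun x hx => ?_)
  have hx1 : (1:ℝ) ≤ x := le_of_lt hx
  have hx0 : (0:ℝ) < x := lt_of_lt_of_le one_pos hx1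
  rw [norm_integrand A hx1 n s]
  calc |A x| * Real.log x ^ n * x ^ (-s.re)
      ≤ |A x| * (C * x ^ (s.re - σ)) * x ^ (-s.re) := by
        gcongr
        exact hCle x hx1
    _ = C * (|A x| * (x ^ (s.re - σ) * x ^ (-s.re))) := by ring
    _ = C * (|A x| * x ^ (-σ)) := by
        rw [← Real.rpow_add hx0]
        ring_nf

lemma integrableOn_rInt (A : ℝ → ℝ) (hA : ContinuousOn A (Ici 1)) {σ : ℝ} (hP : P A σ)
    (n : ℕ) {σ₀ : ℝ} (hs : σ < σ₀) :
    IntegrableOn (fun x : ℝ => A x * Real.log x ^ n * x ^ (-σ₀)) (Ioi 1) := by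
  obtain ⟨C, hC, hCle⟩ := pow_log_le n (δ := σ₀ - σ) (by linarith)
  refine Integrable.mono' (hP.const_mul C)
    (((contOn_rInt A hA n σ₀).mono Ioi_subset_Ici_self).aestronglyMeasurable measurableSet_Ioi) ?_
  rw [ae_restrict_iff' measurableSet_Ioi]
  refine Filter.Eventually.of_forall (fun x hx => ?_)
  have hx1 : (1:ℝ) ≤ x := le_of_lt hx
  have hx0 : (0:ℝ) < x := lt_of_lt_of_le one_pos hx1
  have hlog := Real.log_nonneg hx1
  have hrp : (0:ℝ) ≤ x ^ (-σ₀) := Real.rpow_nonneg hx0.le _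
  rw [Real.norm_eq_abs, abs_mul, abs_mul, abs_of_nonneg (pow_nonneg hlog n), abs_of_nonneg hrp]
  calc |A x| * Real.log x ^ n * x ^ (-σ₀)
      ≤ |A x| * (C * x ^ (σ₀ - σ)) * x ^ (-σ₀) := by
        gcongr
        exact hCle x hx1
    _ = C * (|A x| * (x ^ (σ₀ - σ) * x ^ (-σ₀))) := by ring
    _ = C * (|A x| * x ^ (-σ)) := by
        rw [← Real.rpow_add hx0]
        ring_nf

lemma contOn_absA (A : ℝ → ℝ) (hA : ContinuousOn A (Ici 1)) (σ' : ℝ) :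
    ContinuousOn (fun x : ℝ => |A x| * x ^ (-σ')) (Ici 1) := by
  have hcp : ContinuousOn (fun x : ℝ => x ^ (-σ')) (Ici 1) :=
    continuousOn_id.rpow_const (fun x hx => Or.inl (by
      have h1 := mem_Ici.mp hx
      simp only [id_eq]
      intro hc; rw [hc] at h1; exact absurd h1 (by norm_num)))
  exact hA.abs.mul hcp

lemma P_mono (A : ℝ → ℝ) (hA : ContinuousOn A (Ici 1)) {σ σ' : ℝ} (hP : P A σ) (h : σ ≤ σ') :
    P A σ' := by
  have hcont := contOn_absA A hA σ'
  refine Integrable.mono' hP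
    ((hcont.mono Ioi_subset_Ici_self).aestronglyMeasurable measurableSet_Ioi) ?_
  rw [ae_restrict_iff' measurableSet_Ioi]
  refine Filter.Eventually.of_forall (fun x hx => ?_)
  have hx1 : (1:ℝ) ≤ x := le_of_lt hx
  have hx0 : (0:ℝ) < x := lt_of_lt_of_le one_pos hx1
  rw [Real.norm_eq_abs, abs_mul, abs_abs, abs_of_nonneg (Real.rpow_nonneg hx0.le _)]
  exact mul_le_mul_of_nonneg_left
    (Real.rpow_le_rpow_of_exponent_le hx1 (by linarith)) (abs_nonneg _)

lemma hasDerivAt_gfun (A : ℝ → ℝ) (hA : ContinuousOn A (Ici 1)) {σ : ℝ} (hP : P A σ)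
    (n : ℕ) {s : ℂ} (hs : σ < s.re) :
    HasDerivAt (gfun A n) (-(gfun A (n+1) s)) s := by
  set ε : ℝ := (s.re - σ)/2 with hε
  have hε0 : 0 < ε := by simp only [hε]; linarith
  obtain ⟨C, hC, hCle⟩ := pow_log_le (n+1) hε0
  have h := hasDerivAt_integral_of_dominated_loc_of_deriv_le (μ := volume.restrict (Ioi 1))
    (F := fun (z : ℂ) (x : ℝ) => (A x : ℂ) * (Real.log x : ℂ) ^ n * (x:ℂ) ^ (-z))
    (F' := fun (z : ℂ) (x : ℝ) => -((A x : ℂ) * (Real.log x : ℂ) ^ (n+1) * (x:ℂ) ^ (-z)))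
    (x₀ := s) (bound := fun x => C * (|A x| * x ^ (-σ))) (Metric.ball_mem_nhds s hε0)
    (Filter.Eventually.of_forall (fun z => aesm_integrand A hA n z))
    (integrableOn_cInt A hA hP n hs)
    ((aesm_integrand A hA (n+1) s).neg)
    ?_ (hP.const_mul C) ?_
  · have := h.2
    rw [integral_neg] at this
    exact this
  · rw [ae_restrict_iff' measurableSet_Ioi]
    refine Filter.Eventually.of_forall (fun x hx z hz => ?_)
    have hx1 : (1:ℝ) ≤ x := le_of_lt hx
    have hx0 : (0:ℝ) < x := lt_of_lt_of_le one_pos hx1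
    rw [norm_neg, norm_integrand A hx1 (n+1) z]
    have hzre : σ + ε ≤ z.re := by
      have h1 : |z.re - s.re| ≤ dist z s := by
        rw [Complex.dist_eq, ← Complex.sub_re]
        exact Complex.abs_re_le_norm _
      have := Metric.mem_ball.mp hz
      have h2 : |z.re - s.re| < ε := lt_of_le_of_lt h1 this
      have := abs_lt.mp h2
      simp only [hε] at this ⊢
      linarith [this.1]
    calc |A x| * Real.log x ^ (n+1) * x ^ (-z.re)
        ≤ |A x| * (C * x ^ ε) * x ^ (-z.re) := by
          gcongr
          exact hCle x hx1
      _ = C * (|A x| * (x ^ ε * x ^ (-z.re))) := by ring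
      _ = C * (|A x| * x ^ (ε + -z.re)) := by rw [← Real.rpow_add hx0]
      _ ≤ C * (|A x| * x ^ (-σ)) := by
          gcongr
          · linarith
  · rw [ae_restrict_iff' measurableSet_Ioi]
    refine Filter.Eventually.of_forall (fun x hx z _ => ?_)
    have hx1 : (1:ℝ) ≤ x := le_of_lt hx
    have hx0 : (0:ℝ) < x := lt_of_lt_of_le one_pos hx1
    have h1 : HasDerivAt (fun z : ℂ => (Real.log x:ℂ) * (-z)) (-(Real.log x:ℂ)) z := by
      simpa using ((hasDerivAt_id z).neg.const_mul ((Real.log x : ℂ)))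
    have hD := (h1.cexp).const_mul ((A x : ℂ) * (Real.log x : ℂ) ^ n)
    simp only [cpow_eq_exp hx0]
    exact hD.congr_deriv (by ring)

lemma iteratedDeriv_gfun (A : ℝ → ℝ) (hA : ContinuousOn A (Ici 1)) {σ : ℝ}
    (hI : ∀ δ : ℝ, 0 < δ → P A (σ + δ)) (n : ℕ) {s : ℂ} (hs : σ < s.re) :
    iteratedDeriv n (gfun A 0) s = (-1)^n * gfun A n s := by
  induction n generalizing s with
  | zero => simp
  | succ n ih =>
    have hopen : IsOpen {z : ℂ | σ < z.re} := isOpen_lt continuous_const Complex.continuous_re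
    have hev : iteratedDeriv n (gfun A 0) =ᶠ[nhds s] fun z => (-1)^n * gfun A n z :=
      Filter.eventuallyEq_of_mem (hopen.mem_nhds hs) (fun z hz => ih hz)
    rw [iteratedDeriv_succ, hev.deriv_eq]
    have hδ : 0 < (s.re - σ)/2 := by linarith
    have hd := (hasDerivAt_gfun A hA (hI _ hδ) n
      (show σ + (s.re - σ)/2 < s.re by linarith)).const_mul ((-1:ℂ)^n)
    rw [hd.deriv]
    ring

lemma diffOn_gfun (A : ℝ → ℝ) (hA : ContinuousOn A (Ici 1)) {σ : ℝ}
    (hI : ∀ δ : ℝ, 0 < δ → P A (σ + δ)) (n : ℕ) :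
    DifferentiableOn ℂ (gfun A n) {s : ℂ | σ < s.re} := by
  intro s hs
  have hs' : σ < s.re := hs
  have hδ : 0 < (s.re - σ)/2 := by linarith
  exact ((hasDerivAt_gfun A hA (hI _ hδ) n
    (show σ + (s.re - σ)/2 < s.re by linarith)).differentiableAt).differentiableWithinAt

lemma ofReal_integrand (A : ℝ → ℝ) {x : ℝ} (hx : 1 ≤ x) (n : ℕ) (σ₀ : ℝ) :
    (A x : ℂ) * (Real.log x : ℂ) ^ n * (x:ℂ) ^ (-(σ₀:ℂ))
      = ((A x * Real.log x ^ n * x ^ (-σ₀) : ℝ) : ℂ) := by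
  have hx0 : (0:ℝ) < x := lt_of_lt_of_le one_pos hx
  rw [show (-(σ₀:ℂ)) = ((-σ₀ : ℝ):ℂ) by push_cast; ring, ← Complex.ofReal_cpow hx0.le]
  push_cast
  ring


lemma landau_key (A : ℝ → ℝ) (σ₁ c X : ℝ) (U : Set ℂ) (G : ℂ → ℂ)
    (hX : 1 ≤ X) (hA : ContinuousOn A (Set.Ici 1)) (hpos : ∀ x, X < x → 0 ≤ A x)
    (hconv : ∀ s : ℂ, c < s.re →
      IntegrableOn (fun x : ℝ => (A x : ℂ) * (x : ℂ) ^ (-s)) (Set.Ioi (1 : ℝ)))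
    (hUopen : IsOpen U)
    (hray : ∀ σ : ℝ, σ₁ < σ → (σ : ℂ) ∈ U)
    (hhalf : {s : ℂ | c < s.re} ⊆ U)
    (hG : DifferentiableOn ℂ G U)
    (hagree : ∀ s : ℂ, c < s.re →
      G s = ∫ x in Set.Ioi (1 : ℝ), (A x : ℂ) * (x : ℂ) ^ (-s)) :
    ∃ H : ℂ → ℂ, DifferentiableOn ℂ H {s : ℂ | σ₁ < s.re} ∧
      ∀ s : ℂ, c < s.re →
        H s = ∫ x in Set.Ioi (1 : ℝ), (A x : ℂ) * (x : ℂ) ^ (-s) := by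
  have hg0 : ∀ s : ℂ, gfun A 0 s = ∫ x in Set.Ioi (1:ℝ), (A x : ℂ) * (x:ℂ)^(-s) := by
    intro s; unfold gfun; simp only [pow_zero, mul_one]
  have hPc : ∀ σ : ℝ, c < σ → P A σ := by
    intro σ hσ
    refine ((hconv σ (by simpa using hσ)).norm).congr ?_
    rw [Filter.EventuallyEq, ae_restrict_iff' measurableSet_Ioi]
    refine Filter.Eventually.of_forall (fun x hx => ?_)
    have h := norm_integrand A (le_of_lt hx) 0 (σ:ℂ)
    simp only [pow_zero, mul_one] at h
    rw [h, Complex.ofReal_re]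
  have key : ∀ σ : ℝ, σ₁ < σ → P A σ := by
    by_contra hk
    push_neg at hk
    obtain ⟨σ₂, hσ₂₁, hσ₂⟩ := hk
    set S : Set ℝ := {σ : ℝ | P A σ} with hSdef
    have hmono : ∀ ⦃a b : ℝ⦄, a ∈ S → a ≤ b → b ∈ S := fun a b ha hab => P_mono A hA ha hab
    have hne : (max c σ₂ + 1) ∈ S := hPc _ (by linarith [le_max_left c σ₂])
    have hbdd : ∀ σ ∈ S, σ₂ ≤ σ := by
      intro σ hσ
      by_contra h
      push_neg at h
      exact hσ₂ (hmono hσ h.le)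
    have hbddb : BddBelow S := ⟨σ₂, fun σ hσ => hbdd σ hσ⟩
    have hSne : S.Nonempty := ⟨_, hne⟩
    set σS : ℝ := sInf S with hσSdef
    have hσ₂S : σ₂ ≤ σS := le_csInf hSne hbdd
    have hσ₁S : σ₁ < σS := lt_of_lt_of_le hσ₂₁ hσ₂S
    have hIδ : ∀ δ : ℝ, 0 < δ → P A (σS + δ) := by
      intro δ hδ
      obtain ⟨σ, hσ, hlt⟩ := (csInf_lt_iff hbddb hSne).mp (by linarith : σS < σS + δ)
      exact hmono hσ hlt.le
    have hnP : ∀ σ : ℝ, σ < σS → ¬ P A σ := fun σ h hP =>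
      absurd (csInf_le hbddb hP) (not_le.mpr h)
    -- geometry
    have hUσS : ((σS : ℝ) : ℂ) ∈ U := hray σS hσ₁S
    obtain ⟨ε, hε, hball⟩ := Metric.isOpen_iff.mp hUopen _ hUσS
    set σ₀ : ℝ := σS + ε/8 with hσ₀def
    set ρ : ℝ := ε/5 with hρdef
    set σ : ℝ := σ₀ - ρ with hσdef
    have hσltσS : σ < σS := by rw [hσdef, hσ₀def, hρdef]; linarith
    have hballσ₀ : Metric.ball ((σ₀:ℝ):ℂ) (ε/4) ⊆ U := by
      intro z hz
      apply hball
      have h1 : dist z ((σS:ℝ):ℂ) ≤ dist z ((σ₀:ℝ):ℂ) + dist ((σ₀:ℝ):ℂ) ((σS:ℝ):ℂ) :=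
        dist_triangle _ _ _
      have h2 : dist ((σ₀:ℝ):ℂ) ((σS:ℝ):ℂ) = ε/8 := by
        rw [Complex.dist_eq, ← Complex.ofReal_sub, Complex.norm_real, Real.norm_eq_abs, hσ₀def]
        rw [show σS + ε/8 - σS = ε/8 by ring, abs_of_pos (by linarith)]
      have h3 := Metric.mem_ball.mp hz
      rw [Metric.mem_ball]
      calc dist z ((σS:ℝ):ℂ) ≤ dist z ((σ₀:ℝ):ℂ) + ε/8 := by rw [← h2]; exact h1
        _ < ε := by linarith
    -- identity theorem on connected component
    set W : Set ℂ := U ∩ {z : ℂ | σS < z.re} with hWdef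
    have hWopen : IsOpen W := hUopen.inter (isOpen_lt continuous_const Complex.continuous_re)
    set z₀ : ℂ := ((max c σS + 1 : ℝ) : ℂ) with hz₀def
    have hz₀W : z₀ ∈ W := by
      constructor
      · refine hhalf ?_
        simp only [mem_setOf_eq, hz₀def, Complex.ofReal_re]
        linarith [le_max_left c σS]
      · simp only [mem_setOf_eq, hz₀def, Complex.ofReal_re]
        linarith [le_max_right c σS]
    set V : Set ℂ := connectedComponentIn W z₀ with hVdef
    have hVopen : IsOpen V := hWopen.connectedComponentIn
    have hVsub : V ⊆ W := connectedComponentIn_subset _ _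
    have hgdiff : DifferentiableOn ℂ (gfun A 0) {z : ℂ | σS < z.re} := diffOn_gfun A hA hIδ 0
    have hgV : AnalyticOnNhd ℂ (gfun A 0) V :=
      (hgdiff.mono (hVsub.trans inter_subset_right)).analyticOnNhd hVopen
    have hGV : AnalyticOnNhd ℂ G V :=
      (hG.mono (hVsub.trans inter_subset_left)).analyticOnNhd hVopen
    have hz₀V : z₀ ∈ V := mem_connectedComponentIn hz₀W
    have hevz₀ : gfun A 0 =ᶠ[nhds z₀] G := by
      have hO : IsOpen {z : ℂ | max c σS < z.re} :=
        isOpen_lt continuous_const Complex.continuous_re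
      refine Filter.eventuallyEq_of_mem (hO.mem_nhds ?_) ?_
      · simp only [mem_setOf_eq, hz₀def, Complex.ofReal_re]; linarith
      · intro z hz
        exact (hg0 z).trans (hagree z (lt_of_le_of_lt (le_max_left c σS) hz)).symm
    have hEq : Set.EqOn (gfun A 0) G V :=
      hgV.eqOn_of_preconnected_of_eventuallyEq hGV (isPreconnected_connectedComponentIn)
        hz₀V hevz₀
    -- the ray lies in V
    have hrayV : (Complex.ofReal '' Ioi σS) ⊆ V := by
      refine IsPreconnected.subset_connectedComponentIn ?_ ?_ ?_
      · exact isPreconnected_Ioi.image _ Complex.continuous_ofReal.continuousOn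
      · exact ⟨max c σS + 1, by simp only [mem_Ioi]; linarith [le_max_right c σS], rfl⟩
      · rintro w ⟨t, ht, rfl⟩
        exact ⟨hray t (lt_trans hσ₁S ht), by simpa using ht⟩
    have hσ₀V : ((σ₀:ℝ):ℂ) ∈ V := hrayV ⟨σ₀, by simp only [mem_Ioi, hσ₀def]; linarith, rfl⟩
    have hevσ₀ : G =ᶠ[nhds ((σ₀:ℝ):ℂ)] gfun A 0 :=
      Filter.eventuallyEq_of_mem (hVopen.mem_nhds hσ₀V) (fun z hz => (hEq hz).symm)
    -- real integrals
    have hPσ' : P A (σS + ε/16) := hIδ _ (by linarith)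
    have hσ'σ₀ : σS + ε/16 < σ₀ := by rw [hσ₀def]; linarith
    set In : ℕ → ℝ := fun n => ∫ x in Ioi (1:ℝ), A x * Real.log x ^ n * x ^ (-σ₀) with hIndef
    have hInt : ∀ n, IntegrableOn (fun x : ℝ => A x * Real.log x ^ n * x ^ (-σ₀)) (Ioi 1) :=
      fun n => integrableOn_rInt A hA hPσ' n hσ'σ₀
    have hgfun_real : ∀ n, gfun A n ((σ₀:ℝ):ℂ) = ((In n : ℝ) : ℂ) := by
      intro n
      unfold gfun
      rw [hIndef]
      simp only
      rw [setIntegral_congr_fun (f := fun x : ℝ => (A x : ℂ) * (Real.log x : ℂ) ^ n * (x:ℂ) ^ (-(σ₀:ℂ)))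
        (g := fun x : ℝ => ((A x * Real.log x ^ n * x ^ (-σ₀) : ℝ) : ℂ)) measurableSet_Ioi
        (fun x hx => ofReal_integrand A (le_of_lt hx) n σ₀)]
      exact integral_ofReal
    have hiter : ∀ n : ℕ, iteratedDeriv n G ((σ₀:ℝ):ℂ) = (-1:ℂ)^n * ((In n : ℝ):ℂ) := by
      intro n
      rw [hevσ₀.iteratedDeriv_eq n,
        iteratedDeriv_gfun A hA hIδ n (by simp only [Complex.ofReal_re, hσ₀def]; linarith),
        hgfun_real n]
    -- Taylor series summability
    have hballdiff : DifferentiableOn ℂ G (Metric.ball ((σ₀:ℝ):ℂ) (ε/4)) := hG.mono hballσ₀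
    have hσmem : ((σ:ℝ):ℂ) ∈ Metric.ball ((σ₀:ℝ):ℂ) (ε/4) := by
      rw [Metric.mem_ball, Complex.dist_eq, ← Complex.ofReal_sub, Complex.norm_real, Real.norm_eq_abs]
      rw [show σ - σ₀ = -ρ by rw [hσdef]; ring, abs_neg, abs_of_pos (by rw [hρdef]; linarith)]
      rw [hρdef]; linarith
    have htay := Complex.hasSum_taylorSeries_on_ball hballdiff hσmem
    have hsummable : Summable (fun n : ℕ => ((ρ ^ n / n.factorial * In n : ℝ) : ℂ)) := by
      refine htay.summable.congr (fun n => ?_)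
      rw [hiter n]
      rw [show ((σ:ℝ):ℂ) - ((σ₀:ℝ):ℂ) = ((-ρ : ℝ):ℂ) by
        rw [← Complex.ofReal_sub]; norm_cast; rw [hσdef]; ring]
      rw [smul_eq_mul, smul_eq_mul]
      have : ((-ρ:ℝ):ℂ)^n * ((-1:ℂ)^n * ((In n : ℝ):ℂ)) = ((ρ:ℝ):ℂ)^n * ((In n : ℝ):ℂ) := by
        rw [← mul_assoc, ← mul_pow]
        norm_num
      rw [this]
      push_cast
      field_simp
    have hsumIn : Summable (fun n : ℕ => ρ ^ n / n.factorial * In n) :=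
      Complex.summable_ofReal.mp hsummable
    -- splitting the integral
    have hIocsub : Ioc (1:ℝ) X ⊆ Ioi 1 := fun x hx => hx.1
    have hIoiXsub : Ioi X ⊆ Ioi (1:ℝ) := fun x hx => lt_of_le_of_lt hX hx
    set Jn : ℕ → ℝ := fun n => ∫ x in Ioc (1:ℝ) X, A x * Real.log x ^ n * x ^ (-σ₀) with hJndef
    set Tn : ℕ → ℝ := fun n => ∫ x in Ioi X, A x * Real.log x ^ n * x ^ (-σ₀) with hTndef
    have hsplit : ∀ n, In n = Jn n + Tn n := by
      intro n
      rw [hIndef, hJndef, hTndef]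
      simp only
      rw [← Set.Ioc_union_Ioi_eq_Ioi hX]
      exact setIntegral_union (Set.Ioc_disjoint_Ioi le_rfl) measurableSet_Ioi
        ((hInt n).mono_set hIocsub) ((hInt n).mono_set hIoiXsub)
    set M : ℝ := ∫ x in Ioc (1:ℝ) X, |A x| * x ^ (-σ₀) with hMdef
    have hMint : IntegrableOn (fun x : ℝ => |A x| * x ^ (-σ₀)) (Ioc 1 X) :=
      (P_mono A hA hPσ' (le_of_lt hσ'σ₀)).mono_set hIocsub
    have hM0 : 0 ≤ M := setIntegral_nonneg measurableSet_Ioc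
      (fun x hx => mul_nonneg (abs_nonneg _) (Real.rpow_nonneg (by linarith [hx.1]) _))
    have hJb : ∀ n, |Jn n| ≤ Real.log X ^ n * M := by
      intro n
      have hint1 : IntegrableOn (fun x : ℝ => |A x * Real.log x ^ n * x ^ (-σ₀)|) (Ioc 1 X) :=
        ((hInt n).mono_set hIocsub).abs
      have hint2 : IntegrableOn (fun x : ℝ => Real.log X ^ n * (|A x| * x ^ (-σ₀))) (Ioc 1 X) :=
        hMint.const_mul _
      calc |Jn n| ≤ ∫ x in Ioc (1:ℝ) X, |A x * Real.log x ^ n * x ^ (-σ₀)| := by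
            rw [hJndef]
            simp only
            rw [← Real.norm_eq_abs]
            refine (norm_integral_le_integral_norm _).trans_eq ?_
            refine setIntegral_congr_fun measurableSet_Ioc (fun x hx => ?_)
            simp [Real.norm_eq_abs, abs_mul]
        _ ≤ ∫ x in Ioc (1:ℝ) X, Real.log X ^ n * (|A x| * x ^ (-σ₀)) := by
            refine setIntegral_mono_on hint1 hint2 measurableSet_Ioc (fun x hx => ?_)
            have hx1 : (1:ℝ) ≤ x := le_of_lt hx.1
            have hx0 : (0:ℝ) < x := lt_of_lt_of_le one_pos hx1
            have hlog0 : 0 ≤ Real.log x := Real.log_nonneg hx1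
            have hrp : (0:ℝ) ≤ x ^ (-σ₀) := Real.rpow_nonneg hx0.le _
            rw [abs_mul, abs_mul, abs_of_nonneg (pow_nonneg hlog0 n), abs_of_nonneg hrp]
            have hle : Real.log x ^ n ≤ Real.log X ^ n :=
              pow_le_pow_left₀ hlog0 (Real.log_le_log hx0 hx.2) n
            calc |A x| * Real.log x ^ n * x ^ (-σ₀)
                = Real.log x ^ n * (|A x| * x ^ (-σ₀)) := by ring
              _ ≤ Real.log X ^ n * (|A x| * x ^ (-σ₀)) := by
                  exact mul_le_mul_of_nonneg_right hle (by positivity)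
        _ = Real.log X ^ n * M := by rw [hMdef, integral_const_mul]
    have hρ0 : 0 < ρ := by rw [hρdef]; linarith
    have hsumJ : Summable (fun n : ℕ => ρ ^ n / n.factorial * Jn n) := by
      refine Summable.of_norm_bounded (g := fun n => M * ((ρ * Real.log X) ^ n / n.factorial))
        ((Real.summable_pow_div_factorial _).mul_left M) (fun n => ?_)
      rw [Real.norm_eq_abs, abs_mul, abs_of_nonneg (by positivity : (0:ℝ) ≤ ρ^n / n.factorial)]
      calc ρ^n / n.factorial * |Jn n| ≤ ρ^n / n.factorial * (Real.log X ^ n * M) := by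
            exact mul_le_mul_of_nonneg_left (hJb n) (by positivity)
        _ = M * ((ρ * Real.log X)^n / n.factorial) := by rw [mul_pow]; ring
    have hsumT : Summable (fun n : ℕ => ρ ^ n / n.factorial * Tn n) := by
      refine (hsumIn.sub hsumJ).congr (fun n => ?_)
      rw [hsplit n]; ring
    have hT0 : ∀ n, 0 ≤ Tn n := by
      intro n
      refine setIntegral_nonneg measurableSet_Ioi (fun x hx => ?_)
      have hx1 : (1:ℝ) ≤ x := le_of_lt (lt_of_le_of_lt hX hx)
      exact mul_nonneg (mul_nonneg (hpos x hx) (pow_nonneg (Real.log_nonneg hx1) n))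
        (Real.rpow_nonneg (by linarith) _)
    have hq0 : ∀ n : ℕ, 0 ≤ ρ ^ n / n.factorial * Tn n := fun n =>
      mul_nonneg (by positivity) (hT0 n)
    -- Tonelli argument: integrability at σ < σS
    have hPσ : P A σ := by
      rw [P, ← Set.Ioc_union_Ioi_eq_Ioi hX]
      refine IntegrableOn.union ?_ ?_
      · exact (((contOn_absA A hA σ).mono (Icc_subset_Ici_self)).integrableOn_Icc).mono_set
          Ioc_subset_Icc_self
      · have hsub1 : Ioi X ⊆ Ici (1:ℝ) := fun x hx => mem_Ici.mpr (le_of_lt (lt_of_le_of_lt hX hx))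
        have haes : AEStronglyMeasurable (fun x : ℝ => |A x| * x ^ (-σ))
            (volume.restrict (Ioi X)) :=
          ((contOn_absA A hA σ).mono hsub1).aestronglyMeasurable measurableSet_Ioi
        refine ⟨haes, ?_⟩
        have hnn : 0 ≤ᵐ[volume.restrict (Ioi X)] fun x : ℝ => |A x| * x ^ (-σ) := by
          refine (ae_restrict_iff' measurableSet_Ioi).mpr ?_
          refine Filter.Eventually.of_forall (fun x hx => ?_)
          have hx1 : (1:ℝ) ≤ x := le_of_lt (lt_of_le_of_lt hX hx)
          exact mul_nonneg (abs_nonneg _) (Real.rpow_nonneg (by linarith) _)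
        rw [hasFiniteIntegral_iff_ofReal hnn]
        set u : ℕ → ℝ → ℝ :=
          fun n x => (ρ * Real.log x) ^ n / n.factorial * (A x * x ^ (-σ₀)) with hudef
        have hueq : ∀ n : ℕ, (fun x : ℝ => u n x)
            = fun x : ℝ => ρ ^ n / n.factorial * (A x * Real.log x ^ n * x ^ (-σ₀)) := by
          intro n; funext x; rw [hudef]; simp only; ring
        have huint : ∀ n : ℕ, IntegrableOn (u n) (Ioi X) := by
          intro n
          rw [show (u n : ℝ → ℝ) = fun x : ℝ => u n x from rfl, hueq n]
          exact ((hInt n).mono_set hIoiXsub).const_mul _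
        have hunn : ∀ n : ℕ, ∀ x ∈ Ioi X, 0 ≤ u n x := by
          intro n x hx
          have hx1 : (1:ℝ) ≤ x := le_of_lt (lt_of_le_of_lt hX hx)
          rw [hudef]
          refine mul_nonneg (div_nonneg (pow_nonneg
            (mul_nonneg hρ0.le (Real.log_nonneg hx1)) n) (by positivity)) ?_
          exact mul_nonneg (hpos x hx) (Real.rpow_nonneg (by linarith) _)
        have huptw : ∀ x ∈ Ioi X, ENNReal.ofReal (|A x| * x ^ (-σ))
            = ∑' n : ℕ, ENNReal.ofReal (u n x) := by
          intro x hx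
          have hx1 : (1:ℝ) ≤ x := le_of_lt (lt_of_le_of_lt hX hx)
          have hx0 : (0:ℝ) < x := lt_of_lt_of_le one_pos hx1
          have hsumu : Summable (fun n : ℕ => u n x) := by
            rw [hudef]
            exact (Real.summable_pow_div_factorial (ρ * Real.log x)).mul_right _
          have hval : ∑' n : ℕ, u n x = |A x| * x ^ (-σ) := by
            rw [hudef]
            simp only
            rw [tsum_mul_right]
            rw [show ∑' (n:ℕ), (ρ * Real.log x)^n / (n.factorial:ℝ)
                = Real.exp (ρ * Real.log x) from by
              rw [Real.exp_eq_exp_ℝ, NormedSpace.exp_eq_tsum_div]]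
            rw [mul_comm ρ (Real.log x), ← Real.rpow_def_of_pos hx0,
              abs_of_nonneg (hpos x hx)]
            calc x ^ ρ * (A x * x ^ (-σ₀)) = A x * (x ^ ρ * x ^ (-σ₀)) := by ring
              _ = A x * x ^ (ρ + -σ₀) := by rw [Real.rpow_add hx0]
              _ = A x * x ^ (-σ) := by rw [show ρ + -σ₀ = -σ from by rw [hσdef]; ring]
          rw [← hval, ENNReal.ofReal_tsum_of_nonneg (fun n => hunn n x hx) hsumu]
        have hmeas : ∀ n : ℕ, AEMeasurable (fun x : ℝ => ENNReal.ofReal (u n x))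
            (volume.restrict (Ioi X)) := fun n =>
          ENNReal.measurable_ofReal.comp_aemeasurable ((huint n).aestronglyMeasurable).aemeasurable
        calc ∫⁻ x in Ioi X, ENNReal.ofReal (|A x| * x ^ (-σ))
            = ∫⁻ x in Ioi X, ∑' n : ℕ, ENNReal.ofReal (u n x) := by
              refine setLIntegral_congr_fun measurableSet_Ioi ?_
              exact huptw
          _ = ∑' n : ℕ, ∫⁻ x in Ioi X, ENNReal.ofReal (u n x) := lintegral_tsum hmeas
          _ = ∑' n : ℕ, ENNReal.ofReal (ρ ^ n / n.factorial * Tn n) := by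
              refine tsum_congr (fun n => ?_)
              rw [← ofReal_integral_eq_lintegral_ofReal (huint n) ?_]
              · congr 1
                rw [show ∫ x in Ioi X, u n x = ∫ x in Ioi X,
                    ρ ^ n / n.factorial * (A x * Real.log x ^ n * x ^ (-σ₀)) from by
                  rw [← hueq n]]
                rw [integral_const_mul, hTndef]
              · refine (ae_restrict_iff' measurableSet_Ioi).mpr ?_
                exact Filter.Eventually.of_forall (fun x hx => hunn n x hx)
          _ = ENNReal.ofReal (∑' n : ℕ, ρ ^ n / n.factorial * Tn n) :=
              (ENNReal.ofReal_tsum_of_nonneg hq0 hsumT).symm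
          _ < ⊤ := ENNReal.ofReal_lt_top
    exact hnP σ hσltσS hPσ
  refine ⟨gfun A 0, ?_, fun s hs => hg0 s⟩
  intro s hs
  have hs' : σ₁ < s.re := hs
  have hδ : 0 < (s.re - σ₁)/2 := by linarith
  exact ((hasDerivAt_gfun A hA (key _ (by linarith : σ₁ < σ₁ + (s.re - σ₁)/2)) 0
    (show σ₁ + (s.re - σ₁)/2 < s.re by linarith)).differentiableAt).differentiableWithinAt

end LandauAux

/-- **Contrapositive of Landau's theorem.** Let `A : [1,∞) → ℝ` be continuous, with
`g(s) = ∫₁^∞ A(x) x^{-s} dx` convergent on a half-plane `{Re s > c}`. If there is a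
holomorphic function `G` on an open set `U` containing the real ray `{σ > σ₁}` and the
half-plane `{Re s > c}`, agreeing with `g` on that half-plane, while `g` admits no
holomorphic extension to the full half-plane `{Re s > σ₁}`, then `A` changes sign at
arbitrarily large arguments. -/
theorem landau_contrapositive (A : ℝ → ℝ) (σ₁ c : ℝ) (U : Set ℂ) (G : ℂ → ℂ)
    (hA : ContinuousOn A (Set.Ici (1 : ℝ)))
    (hconv : ∀ s : ℂ, c < s.re →
      IntegrableOn (fun x : ℝ => (A x : ℂ) * (x : ℂ) ^ (-s)) (Set.Ioi (1 : ℝ)))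
    (hUopen : IsOpen U)
    (hray : ∀ σ : ℝ, σ₁ < σ → (σ : ℂ) ∈ U)
    (hhalf : {s : ℂ | c < s.re} ⊆ U)
    (hG : DifferentiableOn ℂ G U)
    (hagree : ∀ s : ℂ, c < s.re →
      G s = ∫ x in Set.Ioi (1 : ℝ), (A x : ℂ) * (x : ℂ) ^ (-s))
    (hnoext : ¬ ∃ H : ℂ → ℂ, DifferentiableOn ℂ H {s : ℂ | σ₁ < s.re} ∧
      ∀ s : ℂ, c < s.re →
        H s = ∫ x in Set.Ioi (1 : ℝ), (A x : ℂ) * (x : ℂ) ^ (-s)) :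
    ∀ X : ℝ, 1 ≤ X → ∃ x y : ℝ, X < x ∧ X < y ∧ 0 < A x ∧ A y < 0 := by
  intro X hX
  by_contra hcon
  push_neg at hcon
  apply hnoext
  by_cases hsgn : ∀ y : ℝ, X < y → 0 ≤ A y
  · exact LandauAux.landau_key A σ₁ c X U G hX hA hsgn hconv hUopen hray hhalf hG hagree
  · push_neg at hsgn
    obtain ⟨y, hy, hyneg⟩ := hsgn
    have hneg : ∀ x : ℝ, X < x → 0 ≤ -A x := by
      intro x hx
      rcases le_or_gt (A x) 0 with h | h
      · linarith
      · exact absurd hyneg (not_lt.mpr (hcon x y hx hy h))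
    have hmm : ∀ s : ℂ, (fun x : ℝ => ((-A x : ℝ) : ℂ) * (x:ℂ) ^ (-s))
        = fun x : ℝ => -((A x : ℂ) * (x:ℂ) ^ (-s)) := by
      intro s; funext x; push_cast; ring
    have hconv' : ∀ s : ℂ, c < s.re →
        IntegrableOn (fun x : ℝ => ((fun t => -A t) x : ℂ) * (x:ℂ) ^ (-s)) (Set.Ioi (1:ℝ)) := by
      intro s hs
      rw [show (fun x : ℝ => ((fun t => -A t) x : ℂ) * (x:ℂ) ^ (-s))
          = fun x : ℝ => -((A x : ℂ) * (x:ℂ) ^ (-s)) from hmm s]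
      exact (hconv s hs).neg
    have hagree' : ∀ s : ℂ, c < s.re →
        (fun z => -G z) s = ∫ x in Set.Ioi (1:ℝ), ((fun t => -A t) x : ℂ) * (x:ℂ) ^ (-s) := by
      intro s hs
      simp only
      rw [show (fun x : ℝ => ((fun t => -A t) x : ℂ) * (x:ℂ) ^ (-s))
          = fun x : ℝ => -((A x : ℂ) * (x:ℂ) ^ (-s)) from hmm s]
      rw [integral_neg, ← hagree s hs]
    obtain ⟨H, hH1, hH2⟩ := LandauAux.landau_key (fun x => -A x) σ₁ c X U (fun z => -G z)
      hX hA.neg hneg hconv' hUopen hray hhalf hG.neg hagree'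
    refine ⟨fun z => -H z, hH1.neg, fun s hs => ?_⟩
    have h2 := hH2 s hs
    rw [show (fun x : ℝ => ((fun t => -A t) x : ℂ) * (x:ℂ) ^ (-s))
        = fun x : ℝ => -((A x : ℂ) * (x:ℂ) ^ (-s)) from hmm s, integral_neg] at h2
    simp only
    rw [h2, neg_neg]
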